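/- For real numbers a ≤ b and t > 0 with t < π/(2√b) when b > 0, one has C_a(t) ≥ C_b(t), where C_κ(t) = √κ·cot(√κ t) if κ > 0, C_κ(t) = 1/t if κ = 0, and C_κ(t) = √(−κ)·coth(√(−κ) t) if κ < 0. -/

import Mathlib

/-- The comparison function `C_b(t)`: `√b·cot(√b t)` if `b > 0`, `1/t` if `b = 0`,
`√(−b)·coth(√(−b) t)` if `b < 0`. -/
noncomputable def Cb (b t : ℝ) : ℝ :=
  if 0 < b then Real.sqrt b * (Real.cos (Real.sqrt b * t) / Real.sin (Real.sqrt b * t))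
  else if b = 0 then 1 / t
  else Real.sqrt (-b) * (Real.cosh (Real.sqrt (-b) * t) / Real.sinh (Real.sqrt (-b) * t))

/-- The barrier function `φ_a` on `[0,r]`. -/
noncomputable def phi (a r t : ℝ) : ℝ :=
  if 0 < a then Real.cos (Real.sqrt a * t) - Real.cos (Real.sqrt a * r)
  else if a = 0 then r ^ 2 - t ^ 2
  else Real.cosh (Real.sqrt (-a) * r) - Real.cosh (Real.sqrt (-a) * t)

open Real Set

private lemma g_hasDeriv {s : ℝ} (hs : Real.sin s ≠ 0) :
    HasDerivAt (fun s => s * (Real.cos s / Real.sin s))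
      (Real.cos s / Real.sin s + s * ((-Real.sin s * Real.sin s - Real.cos s * Real.cos s) / Real.sin s ^ 2)) s := by
  have h := (HasDerivAt.div (Real.hasDerivAt_cos s) (Real.hasDerivAt_sin s) hs)
  simpa [Pi.div_def, Pi.mul_def] using (hasDerivAt_id s).mul h

private lemma g_anti : AntitoneOn (fun s => s * (Real.cos s / Real.sin s)) (Set.Ioo 0 (Real.pi / 2)) := by
  have hsin : ∀ s ∈ Set.Ioo (0:ℝ) (Real.pi / 2), 0 < Real.sin s := fun s hs =>
    Real.sin_pos_of_pos_of_lt_pi hs.1 (lt_trans hs.2 (by linarith [Real.pi_pos]))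
  apply antitoneOn_of_deriv_nonpos (convex_Ioo _ _)
  · exact ContinuousOn.mul continuousOn_id (ContinuousOn.div
      (Real.continuous_cos.continuousOn) (Real.continuous_sin.continuousOn)
      (fun s hs => (hsin s hs).ne'))
  · intro s hs
    rw [interior_Ioo] at hs
    exact (g_hasDeriv (hsin s hs).ne').differentiableAt.differentiableWithinAt
  · intro s hs
    rw [interior_Ioo] at hs
    rw [(g_hasDeriv (hsin s hs).ne').deriv]
    have h1 : 0 < Real.sin s := hsin s hs
    have h2 : Real.sin s * Real.cos s ≤ s := by
      calc Real.sin s * Real.cos s ≤ Real.sin s * 1 := by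
            nlinarith [Real.cos_le_one s]
        _ ≤ s := by simpa using (Real.sin_lt hs.1).le
    have hsq : 0 < Real.sin s ^ 2 := by positivity
    have : -Real.sin s * Real.sin s - Real.cos s * Real.cos s = -1 := by
      nlinarith [Real.sin_sq_add_cos_sq s]
    rw [this]
    have heq : Real.cos s / Real.sin s + s * (-1 / Real.sin s ^ 2)
        = (Real.sin s * Real.cos s - s) / Real.sin s ^ 2 := by
      field_simp; ring
    rw [heq]
    apply div_nonpos_of_nonpos_of_nonneg (by linarith) hsq.le

private lemma h_hasDeriv (s : ℝ) (hs : 0 < s) :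
    HasDerivAt (fun s => s * (Real.cosh s / Real.sinh s))
      (Real.cosh s / Real.sinh s + s * ((Real.sinh s * Real.sinh s - Real.cosh s * Real.cosh s) / Real.sinh s ^ 2)) s := by
  have hne : Real.sinh s ≠ 0 := (Real.sinh_pos_iff.2 hs).ne'
  have h := (HasDerivAt.div (Real.hasDerivAt_cosh s) (Real.hasDerivAt_sinh s) hne)
  simpa [Pi.div_def, Pi.mul_def] using (hasDerivAt_id s).mul h

private lemma h_mono : MonotoneOn (fun s => s * (Real.cosh s / Real.sinh s)) (Set.Ioi 0) := by
  apply monotoneOn_of_deriv_nonneg (convex_Ioi _)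
  · exact ContinuousOn.mul continuousOn_id (ContinuousOn.div
      (Real.continuous_cosh.continuousOn) (Real.continuous_sinh.continuousOn)
      (fun s hs => (Real.sinh_pos_iff.2 hs).ne'))
  · intro s hs
    rw [interior_Ioi] at hs
    exact (h_hasDeriv s hs).differentiableAt.differentiableWithinAt
  · intro s hs
    rw [interior_Ioi] at hs
    rw [(h_hasDeriv s hs).deriv]
    have h1 : 0 < Real.sinh s := Real.sinh_pos_iff.2 hs
    have h2 : s ≤ Real.sinh s * Real.cosh s := by
      calc s ≤ Real.sinh s := (Real.self_lt_sinh_iff.2 hs).le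
        _ ≤ Real.sinh s * Real.cosh s := by nlinarith [Real.one_le_cosh s]
    have hsq : 0 < Real.sinh s ^ 2 := by positivity
    have : Real.sinh s * Real.sinh s - Real.cosh s * Real.cosh s = -1 := by
      nlinarith [Real.cosh_sq_sub_sinh_sq s]
    rw [this]
    have heq : Real.cosh s / Real.sinh s + s * (-1 / Real.sinh s ^ 2)
        = (Real.sinh s * Real.cosh s - s) / Real.sinh s ^ 2 := by
      field_simp; ring
    rw [heq]
    apply div_nonneg (by linarith) hsq.le

private lemma g_le_one {s : ℝ} (h1 : 0 < s) (h2 : s < Real.pi / 2) :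
    s * (Real.cos s / Real.sin s) ≤ 1 := by
  have htan := Real.lt_tan h1 h2
  rw [Real.tan_eq_sin_div_cos] at htan
  have hcos : 0 < Real.cos s := Real.cos_pos_of_mem_Ioo ⟨by linarith [Real.pi_pos], h2⟩
  have hsin : 0 < Real.sin s := Real.sin_pos_of_pos_of_lt_pi h1 (by linarith [Real.pi_pos])
  rw [lt_div_iff₀ hcos] at htan
  rw [mul_div_assoc', div_le_one hsin]
  nlinarith

private lemma one_le_h {s : ℝ} (h1 : 0 < s) : 1 ≤ s * (Real.cosh s / Real.sinh s) := by
  have hsinh : 0 < Real.sinh s := Real.sinh_pos_iff.2 h1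
  have h2 : Real.sinh s ≤ s * Real.cosh s := by
    -- F s = s * cosh s - sinh s is nonneg for s ≥ 0
    have key : ∀ x : ℝ, 0 ≤ x → 0 ≤ x * Real.cosh x - Real.sinh x := by
      intro x hx
      have hd : ∀ y : ℝ, HasDerivAt (fun y => y * Real.cosh y - Real.sinh y)
          (y * Real.sinh y) y := by
        intro y
        have h := ((hasDerivAt_id y).mul (Real.hasDerivAt_cosh y)).sub (Real.hasDerivAt_sinh y)
        have : (1 : ℝ) * Real.cosh y + id y * Real.sinh y - Real.cosh y = y * Real.sinh y := by
          simp only [id_eq]; ring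
        rw [this] at h
        exact h
      have hmono : MonotoneOn (fun y => y * Real.cosh y - Real.sinh y) (Set.Ici 0) := by
        apply monotoneOn_of_deriv_nonneg (convex_Ici _)
        · fun_prop
        · intro y hy
          exact (hd y).differentiableAt.differentiableWithinAt
        · intro y hy
          rw [interior_Ici] at hy
          rw [(hd y).deriv]
          exact mul_nonneg (le_of_lt hy) (Real.sinh_pos_iff.2 hy).le
      have := hmono (Set.self_mem_Ici) (Set.mem_Ici.2 hx) hx
      simpa using this
    linarith [key s h1.le]
  rw [mul_div_assoc', le_div_iff₀ hsinh]
  linarith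

/-- for `a ≤ b` and `t > 0` (with `t < π/(2√b)` when `b > 0`),
one has `C_a(t) ≥ C_b(t)`. -/
theorem Cb_monotone_in_curvature (a b t : ℝ) (hab : a ≤ b) (ht : 0 < t)
    (hb : 0 < b → t < Real.pi / (2 * Real.sqrt b)) :
    Cb a t ≥ Cb b t := by
  -- rewrite Cb in terms of g/h evaluated at √|κ|·t, divided by t
  have key_pos : ∀ κ : ℝ, 0 < κ → Cb κ t =
      (Real.sqrt κ * t) * (Real.cos (Real.sqrt κ * t) / Real.sin (Real.sqrt κ * t)) / t := by
    intro κ hκ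
    rw [Cb, if_pos hκ]
    field_simp
  have key_neg : ∀ κ : ℝ, κ < 0 → Cb κ t =
      (Real.sqrt (-κ) * t) * (Real.cosh (Real.sqrt (-κ) * t) / Real.sinh (Real.sqrt (-κ) * t)) / t := by
    intro κ hκ
    rw [Cb, if_neg (not_lt.2 hκ.le), if_neg hκ.ne]
    field_simp
  rcases lt_trichotomy b 0 with hb0 | hb0 | hb0
  · -- b < 0, so a < 0
    have ha0 : a < 0 := lt_of_le_of_lt hab hb0
    rw [key_neg a ha0, key_neg b hb0, ge_iff_le, div_le_div_iff_of_pos_right ht]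
    have hsb : 0 < Real.sqrt (-b) * t := mul_pos (Real.sqrt_pos.2 (by linarith)) ht
    have hle : Real.sqrt (-b) * t ≤ Real.sqrt (-a) * t :=
      mul_le_mul_of_nonneg_right (Real.sqrt_le_sqrt (by linarith)) ht.le
    exact h_mono (Set.mem_Ioi.2 hsb) (Set.mem_Ioi.2 (lt_of_lt_of_le hsb hle)) hle
  · -- b = 0
    subst hb0
    rcases lt_or_eq_of_le hab with ha0 | ha0
    · rw [key_neg a ha0]
      have hCb : Cb 0 t = 1 / t := by rw [Cb, if_neg (lt_irrefl 0), if_pos rfl]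
      rw [hCb, ge_iff_le, div_le_div_iff_of_pos_right ht]
      exact one_le_h (mul_pos (Real.sqrt_pos.2 (by linarith)) ht)
    · rw [ha0]
  · -- b > 0
    have hsb : 0 < Real.sqrt b := Real.sqrt_pos.2 hb0
    have hbt : 0 < Real.sqrt b * t := mul_pos hsb ht
    have hbt2 : Real.sqrt b * t < Real.pi / 2 := by
      have h2 := (lt_div_iff₀ (by positivity : (0:ℝ) < 2 * Real.sqrt b)).1 (hb hb0)
      nlinarith
    rw [key_pos b hb0]
    rcases lt_trichotomy a 0 with ha0 | ha0 | ha0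
    · rw [key_neg a ha0, ge_iff_le, div_le_div_iff_of_pos_right ht]
      exact le_trans (g_le_one hbt hbt2) (one_le_h (mul_pos (Real.sqrt_pos.2 (by linarith)) ht))
    · subst ha0
      have hCa : Cb 0 t = 1 / t := by rw [Cb, if_neg (lt_irrefl 0), if_pos rfl]
      rw [hCa, ge_iff_le, div_le_div_iff_of_pos_right ht]
      exact g_le_one hbt hbt2
    · rw [key_pos a ha0, ge_iff_le, div_le_div_iff_of_pos_right ht]
      have hat : 0 < Real.sqrt a * t := mul_pos (Real.sqrt_pos.2 ha0) ht
      have hle : Real.sqrt a * t ≤ Real.sqrt b * t :=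
        mul_le_mul_of_nonneg_right (Real.sqrt_le_sqrt hab) ht.le
      exact g_anti (Set.mem_Ioo.2 ⟨hat, lt_of_le_of_lt hle hbt2⟩)
        (Set.mem_Ioo.2 ⟨hbt, hbt2⟩) hle
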